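/- For all x > 0 and ν ∈ [0,1]: (1/4)·ν·(1−ν)·(x + 1 − |x−1|)·(ln x)² ≤ 1 − ν + ν·x − x^ν ≤ (1/4)·ν·(1−ν)·(x + 1 + |x−1|)·(ln x)². -/

import Mathlib

open Real Set

lemma aux_key (s L c : ℝ) (h : ∀ t ∈ Set.Ioo (0:ℝ) 1, s * (2*c - L^2 * Real.exp (L*t)) ≤ 0)
    (ν : ℝ) (hν : ν ∈ Set.Icc (0:ℝ) 1) :
    0 ≤ s * (1 - ν + ν * Real.exp L - Real.exp (L*ν) - c*ν*(1-ν)) := by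
  set eL := Real.exp L with heL
  have h1 : ∀ t : ℝ, HasDerivAt (fun t => Real.exp (L*t)) (L * Real.exp (L*t)) t := by
    intro t
    simpa [mul_comm] using (((hasDerivAt_id t).const_mul L).exp)
  set F : ℝ → ℝ := fun t => s * (1 + (eL-1-c)*t + c*t^2 - Real.exp (L*t)) with hF
  have hF' : ∀ t : ℝ, HasDerivAt F (s * ((eL-1-c) + c*(2*t) - L * Real.exp (L*t))) t := by
    intro t
    have := ((((hasDerivAt_const t (1:ℝ)).add ((hasDerivAt_id t).const_mul (eL-1-c))).add
      ((hasDerivAt_pow 2 t).const_mul c)).sub (h1 t)).const_mul s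
    refine this.congr_deriv ?_
    norm_num
  have hF'' : ∀ t : ℝ, HasDerivAt (fun t => s * ((eL-1-c) + c*(2*t) - L * Real.exp (L*t)))
      (s * (2*c - L^2 * Real.exp (L*t))) t := by
    intro t
    have := (((hasDerivAt_const t (eL-1-c)).add (((hasDerivAt_id t).const_mul 2).const_mul c)).sub
      ((h1 t).const_mul L)).const_mul s
    refine this.congr_deriv ?_
    ring
  have hconc : ConcaveOn ℝ (Set.Icc (0:ℝ) 1) F := by
    refine concaveOn_of_hasDerivWithinAt2_nonpos (convex_Icc 0 1)
      (Continuous.continuousOn (by fun_prop)) (fun t _ => (hF' t).hasDerivWithinAt)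
      (fun t _ => (hF'' t).hasDerivWithinAt) (fun t ht => ?_)
    rw [interior_Icc] at ht
    exact h t ht
  have h0 : F 0 = 0 := by simp [hF]
  have h1' : F 1 = 0 := by simp only [hF]; rw [mul_one, heL]; ring
  obtain ⟨hν0, hν1⟩ := hν
  have := hconc.2 (Set.left_mem_Icc.2 zero_le_one) (Set.right_mem_Icc.2 zero_le_one)
    (by linarith : (0:ℝ) ≤ 1 - ν) hν0 (by ring : (1-ν) + ν = 1)
  simp only [smul_eq_mul, h0, h1', mul_zero, add_zero, mul_one, zero_add] at this
  have hFν : 0 ≤ F ν := this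
  have : F ν = s * (1 - ν + ν * eL - Real.exp (L*ν) - c*ν*(1-ν)) := by
    simp only [hF]; ring
  linarith [this ▸ hFν]

theorem stmt_9 (x : ℝ) (hx : 0 < x) (ν : ℝ) (hν : ν ∈ Set.Icc (0:ℝ) 1) :
    1/4 * ν * (1 - ν) * (x + 1 - |x - 1|) * (Real.log x)^2 ≤ 1 - ν + ν * x - x ^ ν ∧
    1 - ν + ν * x - x ^ ν ≤ 1/4 * ν * (1 - ν) * (x + 1 + |x - 1|) * (Real.log x)^2 := by
  set L := Real.log x with hL
  have hexp : Real.exp L = x := Real.exp_log hx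
  have hrw : ∀ t : ℝ, Real.exp (L * t) = x ^ t := by
    intro t
    rw [Real.rpow_def_of_pos hx]
  -- bounds on x^t for t ∈ (0,1)
  have hlow : ∀ t ∈ Set.Ioo (0:ℝ) 1, min 1 x ≤ x ^ t := by
    intro t ⟨ht0, ht1⟩
    rcases le_or_gt 1 x with h1 | h1
    · exact le_trans (min_le_left _ _) (Real.one_le_rpow h1 ht0.le)
    · refine le_trans (min_le_right _ _) ?_
      calc x = x ^ (1:ℝ) := (Real.rpow_one x).symm
        _ ≤ x ^ t := Real.rpow_le_rpow_of_exponent_ge hx h1.le ht1.le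
  have hhigh : ∀ t ∈ Set.Ioo (0:ℝ) 1, x ^ t ≤ max 1 x := by
    intro t ⟨ht0, ht1⟩
    rcases le_or_gt 1 x with h1 | h1
    · refine le_trans ?_ (le_max_right _ _)
      calc x ^ t ≤ x ^ (1:ℝ) := Real.rpow_le_rpow_of_exponent_le h1 ht1.le
        _ = x := Real.rpow_one x
    · exact le_trans (Real.rpow_le_one hx.le h1.le ht0.le) (le_max_left _ _)
  have habs_min : x + 1 - |x - 1| = 2 * min 1 x := by
    rcases le_or_gt 1 x with h1 | h1
    · rw [abs_of_nonneg (by linarith), min_eq_left h1]; ring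
    · rw [abs_of_neg (by linarith), min_eq_right h1.le]; ring
  have habs_max : x + 1 + |x - 1| = 2 * max 1 x := by
    rcases le_or_gt 1 x with h1 | h1
    · rw [abs_of_nonneg (by linarith), max_eq_right h1]; ring
    · rw [abs_of_neg (by linarith), max_eq_left h1.le]; ring
  constructor
  · have key := aux_key 1 L (min 1 x * L^2 / 2) (by
      intro t ht
      have h1 := hlow t ht
      have := sq_nonneg L
      rw [hrw t]
      nlinarith) ν hν
    rw [hrw ν, hexp] at key
    rw [habs_min]
    nlinarith [key]
  · have key := aux_key (-1) L (max 1 x * L^2 / 2) (by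
      intro t ht
      have h1 := hhigh t ht
      have := sq_nonneg L
      rw [hrw t]
      nlinarith) ν hν
    rw [hrw ν, hexp] at key
    rw [habs_max]
    nlinarith [key]
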